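/- arXiv:2008.03272 — 6 statements merged into one kernel-verified Lean document; each statement's English description precedes it below -/
import Mathlib

section
/- Let α, β ∈ ℝ, u ∈ ℂ and Ω ∈ ℝ with Ω² = β² − |u|². Define M(λ) = [[4λ² + 4iλΩ − (α²+β²), 4iλu],[4iλu*, 4λ² − 4iλΩ − (α²+β²)]]. Then for every λ ∈ ℂ, M(λ) · M(−λ) = ((2λ − i|β|)² − α²)·((2λ + i|β|)² − α²)·I. Consequently, whenever (2λ − i|β|)² ≠ α² and (2λ + i|β|)² ≠ α², the scaled boundary matrix K₀(λ) = M(λ)/((2λ − i|β|)² − α²) satisfies (K₀(λ))⁻¹ = K₀(−λ). -/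
open Complex Matrix

/-- The unscaled boundary matrix `M(λ) = ((2λ−i|β|)²−α²)·K₀(λ)` of the new integrable
boundary condition for NLS. -/
noncomputable def unscaledK (α β : ℝ) (u : ℂ) (Ω : ℝ) (lam : ℂ) :
    Matrix (Fin 2) (Fin 2) ℂ :=
  !![4 * lam ^ 2 + 4 * I * lam * (Ω : ℂ) - ((α : ℂ) ^ 2 + (β : ℂ) ^ 2),
      4 * I * lam * u;
      4 * I * lam * (starRingEnd ℂ u),
      4 * lam ^ 2 - 4 * I * lam * (Ω : ℂ) - ((α : ℂ) ^ 2 + (β : ℂ) ^ 2)]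

/-- `M(λ)·M(−λ) = ((2λ−i|β|)²−α²)·((2λ+i|β|)²−α²)·I`, and consequently the scaled
boundary matrix `K₀(λ) = M(λ)/((2λ−i|β|)²−α²)` satisfies `(K₀(λ))⁻¹ = K₀(−λ)`. -/
theorem boundary_matrix_inverse (α β : ℝ) (u : ℂ) (Ω : ℝ)
    (hΩ : Ω ^ 2 = β ^ 2 - ‖u‖ ^ 2) :
    (∀ lam : ℂ,
      unscaledK α β u Ω lam * unscaledK α β u Ω (-lam) =
        (((2 * lam - I * ((|β| : ℝ) : ℂ)) ^ 2 - (α : ℂ) ^ 2) *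
          ((2 * lam + I * ((|β| : ℝ) : ℂ)) ^ 2 - (α : ℂ) ^ 2)) •
            (1 : Matrix (Fin 2) (Fin 2) ℂ)) ∧
    (∀ lam : ℂ, (2 * lam - I * ((|β| : ℝ) : ℂ)) ^ 2 ≠ (α : ℂ) ^ 2 →
      (2 * lam + I * ((|β| : ℝ) : ℂ)) ^ 2 ≠ (α : ℂ) ^ 2 →
      (((2 * lam - I * ((|β| : ℝ) : ℂ)) ^ 2 - (α : ℂ) ^ 2)⁻¹ • unscaledK α β u Ω lam)⁻¹ =
        ((2 * (-lam) - I * ((|β| : ℝ) : ℂ)) ^ 2 - (α : ℂ) ^ 2)⁻¹ • unscaledK α β u Ω (-lam)) := by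
  have hu : u * (starRingEnd ℂ u) = ((‖u‖ : ℝ) : ℂ) ^ 2 := by
    rw [Complex.mul_conj]
    norm_cast
    rw [Complex.sq_norm]
  have hΩ' : ((Ω : ℂ)) ^ 2 = ((β : ℂ)) ^ 2 - ((‖u‖ : ℝ) : ℂ) ^ 2 := by
    exact_mod_cast congrArg (fun x : ℝ => (x : ℂ)) hΩ
  have hβ : ((|β| : ℝ) : ℂ) ^ 2 = ((β : ℂ)) ^ 2 := by
    norm_cast
    exact sq_abs β
  have hI : (I : ℂ) ^ 2 = -1 := Complex.I_sq
  have h1 : ∀ lam : ℂ,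
      unscaledK α β u Ω lam * unscaledK α β u Ω (-lam) =
        (((2 * lam - I * ((|β| : ℝ) : ℂ)) ^ 2 - (α : ℂ) ^ 2) *
          ((2 * lam + I * ((|β| : ℝ) : ℂ)) ^ 2 - (α : ℂ) ^ 2)) •
            (1 : Matrix (Fin 2) (Fin 2) ℂ) := by
    intro lam
    ext i j
    fin_cases i <;> fin_cases j <;>
      simp [unscaledK, Matrix.mul_apply, Fin.sum_univ_two, Matrix.smul_apply,
        Matrix.one_apply] <;>
      [ (linear_combination (-16 * I ^ 2 * lam ^ 2) * hΩ' + (-16 * I ^ 2 * lam ^ 2) * hu +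
          (2 * (4 * lam ^ 2 - (α : ℂ) ^ 2) - ((|β| : ℝ) : ℂ) ^ 2 - (β : ℂ) ^ 2 -
            16 * lam ^ 2) * hβ +
          (-16 * lam ^ 2 * (β : ℂ) ^ 2 -
            (2 * (4 * lam ^ 2 - (α : ℂ) ^ 2) + (I ^ 2 - 1) * ((|β| : ℝ) : ℂ) ^ 2) *
              ((|β| : ℝ) : ℂ) ^ 2 + 16 * lam ^ 2 * ((|β| : ℝ) : ℂ) ^ 2) * hI);
        ring;
        ring;
        (linear_combination (-16 * I ^ 2 * lam ^ 2) * hΩ' + (-16 * I ^ 2 * lam ^ 2) * hu +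
          (2 * (4 * lam ^ 2 - (α : ℂ) ^ 2) - ((|β| : ℝ) : ℂ) ^ 2 - (β : ℂ) ^ 2 -
            16 * lam ^ 2) * hβ +
          (-16 * lam ^ 2 * (β : ℂ) ^ 2 -
            (2 * (4 * lam ^ 2 - (α : ℂ) ^ 2) + (I ^ 2 - 1) * ((|β| : ℝ) : ℂ) ^ 2) *
              ((|β| : ℝ) : ℂ) ^ 2 + 16 * lam ^ 2 * ((|β| : ℝ) : ℂ) ^ 2) * hI) ]
  refine ⟨h1, fun lam hn hp => ?_⟩
  have hc1 : (2 * lam - I * ((|β| : ℝ) : ℂ)) ^ 2 - (α : ℂ) ^ 2 ≠ 0 := sub_ne_zero.mpr hn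
  have hc2 : (2 * lam + I * ((|β| : ℝ) : ℂ)) ^ 2 - (α : ℂ) ^ 2 ≠ 0 := sub_ne_zero.mpr hp
  apply Matrix.inv_eq_right_inv
  rw [Matrix.smul_mul, Matrix.mul_smul, h1 lam]
  have e : (2 * (-lam) - I * ((|β| : ℝ) : ℂ)) ^ 2 = (2 * lam + I * ((|β| : ℝ) : ℂ)) ^ 2 := by
    ring
  rw [e, smul_smul, smul_smul]
  have key : ∀ t : ℂ, t = 1 → t • (1 : Matrix (Fin 2) (Fin 2) ℂ) = 1 := by
    intro t ht; rw [ht, one_smul]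
  apply key
  field_simp
end

section
/- Let α ∈ ℝ and u₀, v₀ ∈ ℂ. Define, for λ ∈ ℂ, V₀(λ) = −2iλ²σ₃ + [[i|u₀|², 2λu₀ + i v₀],[−2λu₀* + i v₀*, −i|u₀|²]] and the diagonal matrix G(λ) = [[iα − 2λ, 0],[0, iα + 2λ]]. Then V₀(−λ)·G(λ) = G(λ)·V₀(λ) holds for all λ ∈ ℂ if and only if v₀ = α·u₀. (Equivalently: the Robin boundary condition u_x = αu at x = 0 is equivalent to the boundary constraint V(t,0,−λ)G₀(λ) = G₀(λ)V(t,0,λ).) -/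
open Complex Matrix

/-- σ₃ = [[1,0],[0,−1]]. -/
def sigma3 : Matrix (Fin 2) (Fin 2) ℂ := !![1, 0; 0, -1]

/-- The t-part `V₀(λ)` of the NLS Lax pair evaluated at the boundary `x = 0`, with
`u₀ = u(t,0)` and `v₀ = u_x(t,0)`. -/
noncomputable def laxV0 (u₀ v₀ : ℂ) (lam : ℂ) : Matrix (Fin 2) (Fin 2) ℂ :=
  (-2 * I * lam ^ 2) • sigma3 +
    !![I * (((‖u₀‖ : ℝ) : ℂ) ^ 2), 2 * lam * u₀ + I * v₀;
        -2 * lam * (starRingEnd ℂ u₀) + I * (starRingEnd ℂ v₀),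
        -(I * (((‖u₀‖ : ℝ) : ℂ) ^ 2))]

/-- The unscaled Robin boundary matrix `G(λ) = (iα+2λ)·G₀(λ) = [[iα−2λ,0],[0,iα+2λ]]`. -/
noncomputable def robinG (α : ℝ) (lam : ℂ) : Matrix (Fin 2) (Fin 2) ℂ :=
  !![I * (α : ℂ) - 2 * lam, 0; 0, I * (α : ℂ) + 2 * lam]

/-- The Robin boundary condition `u_x = αu` at `x = 0` is equivalent to the boundary
constraint `V(t,0,−λ)G₀(λ) = G₀(λ)V(t,0,λ)` for all `λ`. -/
theorem robin_boundary_constraint (α : ℝ) (u₀ v₀ : ℂ) :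
    (∀ lam : ℂ, laxV0 u₀ v₀ (-lam) * robinG α lam = robinG α lam * laxV0 u₀ v₀ lam) ↔
      v₀ = (α : ℂ) * u₀ := by
  constructor
  · intro h
    have h1 := congrFun (congrFun (h 1) 0) 1
    simp [laxV0, robinG, sigma3, Matrix.mul_apply, Fin.sum_univ_succ] at h1
    have : (4 * I) * (v₀ - (α : ℂ) * u₀) = 0 := by ring_nf; ring_nf at h1; linear_combination h1
    have h4 : (4 : ℂ) * I ≠ 0 := by
      simp [Complex.ext_iff]
    have := mul_eq_zero.mp this
    rcases this with h' | h'
    · exact absurd h' h4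
    · exact sub_eq_zero.mp h'
  · intro hv lam
    subst hv
    ext i j
    fin_cases i <;> fin_cases j <;>
      simp [laxV0, robinG, sigma3, Matrix.mul_apply, Fin.sum_univ_succ, _root_.map_mul,
        Complex.conj_ofReal] <;> ring
end

section
/- Let α, β ∈ ℝ, let λ₁ = ξ + iη with ξ ≠ 0 and η ≠ 0, and set λ̂₁ = −λ₁. Assume (2λ₁ − i|β|)² ≠ α², and set F = ((2λ₁ + i|β|)² − α²)/((2λ₁ − i|β|)² − α²). Let u₁, v₁, û₁, v̂₁ ∈ ℂ∖{0} satisfy û₁/v̂₁ = F · (u₁/v₁). Define C₁ = −(v₁/u₁) · (λ₁ − λ₁*)(λ₁ − λ̂₁)/(λ₁ − λ̂₁*) and C₂ = −(û₁*/(−v̂₁*)) · (λ̂₁* − λ₁*)(λ̂₁* − λ̂₁)/(λ̂₁* − λ₁). Then C₁ · C₂* = −4λ₁² · F · η²/ξ². -/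
open Complex

/-- Product relation for the norming constants of the two-soliton solution obtained by
dressing the zero seed with the pair `λ₁`, `λ̂₁* = −λ₁*`, subject to the new integrable
boundary condition with parameters `α, β`. -/
theorem weights_product_new_bc (α β ξ η : ℝ) (hξ : ξ ≠ 0) (hη : η ≠ 0)
    (lam₁ lamh₁ : ℂ) (hlam₁ : lam₁ = (ξ : ℂ) + (η : ℂ) * I) (hlamh₁ : lamh₁ = -lam₁)
    (hden : (2 * lam₁ - I * ((|β| : ℝ) : ℂ)) ^ 2 ≠ (α : ℂ) ^ 2)
    (F : ℂ)
    (hF : F = ((2 * lam₁ + I * ((|β| : ℝ) : ℂ)) ^ 2 - (α : ℂ) ^ 2) /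
              ((2 * lam₁ - I * ((|β| : ℝ) : ℂ)) ^ 2 - (α : ℂ) ^ 2))
    (u₁ v₁ uh₁ vh₁ : ℂ) (hu₁ : u₁ ≠ 0) (hv₁ : v₁ ≠ 0) (huh₁ : uh₁ ≠ 0) (hvh₁ : vh₁ ≠ 0)
    (hratio : uh₁ / vh₁ = F * (u₁ / v₁))
    (C₁ C₂ : ℂ)
    (hC₁ : C₁ = -(v₁ / u₁) * ((lam₁ - starRingEnd ℂ lam₁) * (lam₁ - lamh₁) /
      (lam₁ - starRingEnd ℂ lamh₁)))
    (hC₂ : C₂ = -(starRingEnd ℂ uh₁ / (-(starRingEnd ℂ vh₁))) *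
      ((starRingEnd ℂ lamh₁ - starRingEnd ℂ lam₁) * (starRingEnd ℂ lamh₁ - lamh₁) /
        (starRingEnd ℂ lamh₁ - lam₁))) :
    C₁ * starRingEnd ℂ C₂ = -4 * lam₁ ^ 2 * F * ((η : ℂ) ^ 2 / (ξ : ℂ) ^ 2) := by
  have hξ' : (ξ : ℂ) ≠ 0 := Complex.ofReal_ne_zero.mpr hξ
  have hcl : starRingEnd ℂ lam₁ = (ξ : ℂ) - (η : ℂ) * I := by
    rw [hlam₁]; simp [map_add, map_mul, Complex.conj_ofReal, Complex.conj_I]; ring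
  have h1 : lam₁ - starRingEnd ℂ lam₁ = 2 * (η : ℂ) * I := by rw [hcl, hlam₁]; ring
  have h2 : lam₁ - lamh₁ = 2 * lam₁ := by rw [hlamh₁]; ring
  have h3 : lam₁ - starRingEnd ℂ lamh₁ = 2 * (ξ : ℂ) := by
    rw [hlamh₁, map_neg, hcl, hlam₁]; ring
  have e1 : C₁ = -(v₁ / u₁) * (2 * lam₁ * (η : ℂ) * I / (ξ : ℂ)) := by
    rw [hC₁, h1, h2, h3]; field_simp
  have e2 : starRingEnd ℂ C₂ = (uh₁ / vh₁) * (-(2 * lam₁ * (η : ℂ) * I / (ξ : ℂ))) := by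
    rw [hC₂]
    simp only [map_mul, map_div₀, map_neg, map_sub, Complex.conj_conj]
    have k1 : lamh₁ - lam₁ = -(2 * lam₁) := by rw [hlamh₁]; ring
    have k2 : lamh₁ - starRingEnd ℂ lamh₁ = -(2 * (η : ℂ) * I) := by
      rw [hlamh₁, map_neg, hcl, hlam₁]; ring
    have k3 : lamh₁ - starRingEnd ℂ lam₁ = -(2 * (ξ : ℂ)) := by
      rw [hlamh₁, hcl, hlam₁]; ring
    rw [k1, k2, k3]
    field_simp
  have hr2 : uh₁ / vh₁ = F * u₁ / v₁ := by rw [hratio]; ring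
  rw [e1, e2, hr2]
  field_simp
  ring_nf
  simp [Complex.I_sq]
end

section
/- Let α ∈ ℝ, let λ₁ = ξ + iη with ξ ≠ 0 and η ≠ 0, and set λ̂₁ = −λ₁. Assume iα + 2λ₁ ≠ 0, and set F = (iα − 2λ₁)/(iα + 2λ₁). Let u₁, v₁, û₁, v̂₁ ∈ ℂ∖{0} satisfy û₁/v̂₁ = F · (u₁/v₁). Define C₁ = −(v₁/u₁) · (λ₁ − λ₁*)(λ₁ − λ̂₁)/(λ₁ − λ̂₁*) and C₂ = −(û₁*/(−v̂₁*)) · (λ̂₁* − λ₁*)(λ̂₁* − λ̂₁)/(λ̂₁* − λ₁). Then C₁ · C₂* = −4λ₁² · F · η²/ξ². -/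
open Complex

/-- Product relation for the norming constants of the two-soliton solution obtained by
dressing the zero seed with the pair `λ₁`, `λ̂₁* = −λ₁*`, subject to the Robin boundary
condition `u_x(t,0) = α u(t,0)`. -/
theorem weights_product_robin_bc (α ξ η : ℝ) (hξ : ξ ≠ 0) (hη : η ≠ 0)
    (lam₁ lamh₁ : ℂ) (hlam₁ : lam₁ = (ξ : ℂ) + (η : ℂ) * I) (hlamh₁ : lamh₁ = -lam₁)
    (hden : I * (α : ℂ) + 2 * lam₁ ≠ 0)
    (F : ℂ)
    (hF : F = (I * (α : ℂ) - 2 * lam₁) / (I * (α : ℂ) + 2 * lam₁))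
    (u₁ v₁ uh₁ vh₁ : ℂ) (hu₁ : u₁ ≠ 0) (hv₁ : v₁ ≠ 0) (huh₁ : uh₁ ≠ 0) (hvh₁ : vh₁ ≠ 0)
    (hratio : uh₁ / vh₁ = F * (u₁ / v₁))
    (C₁ C₂ : ℂ)
    (hC₁ : C₁ = -(v₁ / u₁) * ((lam₁ - starRingEnd ℂ lam₁) * (lam₁ - lamh₁) /
      (lam₁ - starRingEnd ℂ lamh₁)))
    (hC₂ : C₂ = -(starRingEnd ℂ uh₁ / (-(starRingEnd ℂ vh₁))) *
      ((starRingEnd ℂ lamh₁ - starRingEnd ℂ lam₁) * (starRingEnd ℂ lamh₁ - lamh₁) /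
        (starRingEnd ℂ lamh₁ - lam₁))) :
    C₁ * starRingEnd ℂ C₂ = -4 * lam₁ ^ 2 * F * ((η : ℂ) ^ 2 / (ξ : ℂ) ^ 2) := by
  have hξC : (ξ : ℂ) ≠ 0 := by exact_mod_cast hξ
  have h2ξ : (2 : ℂ) * (ξ : ℂ) ≠ 0 := by simpa using hξC
  have e1 : C₁ = -(v₁ / u₁) * (2 * (η : ℂ) * I * lam₁ / (ξ : ℂ)) := by
    have h1 : lam₁ - starRingEnd ℂ lam₁ = 2 * η * I := by
      rw [hlam₁]; simp only [map_add, map_mul, conj_ofReal, conj_I]; ring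
    have h2 : lam₁ - lamh₁ = 2 * lam₁ := by rw [hlamh₁]; ring
    have h3 : lam₁ - starRingEnd ℂ lamh₁ = 2 * ξ := by
      rw [hlamh₁, hlam₁]; simp only [map_neg, map_add, map_mul, conj_ofReal, conj_I]; ring
    rw [hC₁, h1, h2, h3]
    congr 1
    rw [div_eq_div_iff h2ξ hξC]
    ring
  have e2 : starRingEnd ℂ C₂ = (uh₁ / vh₁) * (-(2 * (η : ℂ) * I * lam₁) / (ξ : ℂ)) := by
    have h1 : lamh₁ - lam₁ = -(2 * lam₁) := by rw [hlamh₁]; ring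
    have h2 : lamh₁ - starRingEnd ℂ lamh₁ = -(2 * η * I) := by
      rw [hlamh₁, hlam₁]; simp only [map_neg, map_add, map_mul, conj_ofReal, conj_I]; ring
    have h3 : lamh₁ - starRingEnd ℂ lam₁ = -(2 * ξ) := by
      rw [hlamh₁, hlam₁]; simp only [map_add, map_mul, conj_ofReal, conj_I]; ring
    rw [hC₂]
    simp only [map_mul, map_div₀, map_neg, map_sub, Complex.conj_conj]
    rw [h1, h2, h3]
    congr 1
    field_simp
    ring
  have key : v₁ / u₁ * (uh₁ / vh₁) = F := by
    rw [hratio]; field_simp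
  rw [e1, e2]
  calc -(v₁ / u₁) * (2 * (η : ℂ) * I * lam₁ / (ξ : ℂ)) *
        (uh₁ / vh₁ * (-(2 * (η : ℂ) * I * lam₁) / (ξ : ℂ)))
      = v₁ / u₁ * (uh₁ / vh₁) *
        ((2 * (η : ℂ) * I * lam₁ / (ξ : ℂ)) * ((2 * (η : ℂ) * I * lam₁) / (ξ : ℂ))) := by
        ring
    _ = F * ((2 * (η : ℂ) * I * lam₁ / (ξ : ℂ)) * ((2 * (η : ℂ) * I * lam₁) / (ξ : ℂ))) := by
        rw [key]
    _ = -4 * lam₁ ^ 2 * F * ((η : ℂ) ^ 2 / (ξ : ℂ) ^ 2) := by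
        rw [div_mul_div_comm]
        rw [show ((ξ:ℂ) * ξ) = (ξ:ℂ)^2 by ring]
        field_simp
        linear_combination (4 * (η:ℂ)^2 * lam₁^2 * F) * I_sq
end

section
/- Let α, β ∈ ℝ, ξ ≠ 0, η > 0, and set λ₁ = ξ + iη and F = ((2λ₁ + i|β|)² − α²)/((2λ₁ − i|β|)² − α²), assuming (2λ₁ − i|β|)² ≠ α². Let x₁, x̂₁, φ₁, φ̂₁ ∈ ℝ and define C₁ = 2η·e^{2ηx₁ + iφ₁} and Ĉ₁ = 2η·e^{2ηx̂₁ + iφ̂₁}. If C₁ · Ĉ₁* = −4λ₁² · F · η²/ξ², then x₁ + x̂₁ = (1/(2η))·log(1 + η²/ξ²) + (1/(4η))·log( ((4ξ² − α² − (2η + |β|)²)² + (4ξ(2η + |β|))²) / ((4ξ² − α² − (2η − |β|)²)² + (4ξ(2η − |β|))²) ). -/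
open Complex Real

lemma normSq_exp_real (r θ : ℝ) :
    Complex.normSq (Complex.exp ((r : ℂ) + I * (θ : ℂ))) = Real.exp r ^ 2 := by
  rw [← Complex.sq_norm, Complex.norm_exp]
  simp

/-- Relation between the initial positions of a soliton and its mirror soliton for the
new integrable boundary condition with parameters `α, β`. -/
theorem positions_relation_new_bc (α β ξ η : ℝ) (hξ : ξ ≠ 0) (hη : 0 < η)
    (lam₁ : ℂ) (hlam₁ : lam₁ = (ξ : ℂ) + (η : ℂ) * I)
    (hden : (2 * lam₁ - I * ((|β| : ℝ) : ℂ)) ^ 2 ≠ (α : ℂ) ^ 2)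
    (F : ℂ)
    (hF : F = ((2 * lam₁ + I * ((|β| : ℝ) : ℂ)) ^ 2 - (α : ℂ) ^ 2) /
              ((2 * lam₁ - I * ((|β| : ℝ) : ℂ)) ^ 2 - (α : ℂ) ^ 2))
    (x₁ xh₁ φ₁ φh₁ : ℝ) (C₁ Ch₁ : ℂ)
    (hC₁ : C₁ = (2 * η : ℝ) * Complex.exp ((2 * η * x₁ : ℝ) + I * (φ₁ : ℂ)))
    (hCh₁ : Ch₁ = (2 * η : ℝ) * Complex.exp ((2 * η * xh₁ : ℝ) + I * (φh₁ : ℂ)))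
    (hprod : C₁ * starRingEnd ℂ Ch₁ = -4 * lam₁ ^ 2 * F * ((η : ℂ) ^ 2 / (ξ : ℂ) ^ 2)) :
    x₁ + xh₁ = (1 / (2 * η)) * Real.log (1 + η ^ 2 / ξ ^ 2) +
      (1 / (4 * η)) * Real.log
        (((4 * ξ ^ 2 - α ^ 2 - (2 * η + |β|) ^ 2) ^ 2 + (4 * ξ * (2 * η + |β|)) ^ 2) /
         ((4 * ξ ^ 2 - α ^ 2 - (2 * η - |β|) ^ 2) ^ 2 + (4 * ξ * (2 * η - |β|)) ^ 2)) := by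
  have hb : (0:ℝ) ≤ |β| := abs_nonneg β
  set b := |β| with hbdef
  have hN : (2 * lam₁ + I * (b : ℂ)) ^ 2 - (α : ℂ) ^ 2
      = ((4*ξ^2 - α^2 - (2*η+b)^2 : ℝ) : ℂ) + ((4*ξ*(2*η+b) : ℝ) : ℂ) * I := by
    rw [hlam₁]; push_cast
    linear_combination ((2*(η:ℂ)+(b:ℂ))^2) * Complex.I_sq
  have hD : (2 * lam₁ - I * (b : ℂ)) ^ 2 - (α : ℂ) ^ 2
      = ((4*ξ^2 - α^2 - (2*η-b)^2 : ℝ) : ℂ) + ((4*ξ*(2*η-b) : ℝ) : ℂ) * I := by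
    rw [hlam₁]; push_cast
    linear_combination ((2*(η:ℂ)-(b:ℂ))^2) * Complex.I_sq
  set A := (4*ξ^2 - α^2 - (2*η+b)^2)^2 + (4*ξ*(2*η+b))^2 with hAdef
  set B := (4*ξ^2 - α^2 - (2*η-b)^2)^2 + (4*ξ*(2*η-b))^2 with hBdef
  have hBpos : 0 < B := by
    have hDne : (2 * lam₁ - I * (b : ℂ)) ^ 2 - (α : ℂ) ^ 2 ≠ 0 := sub_ne_zero.mpr hden
    have := Complex.normSq_pos.mpr hDne
    rwa [hD, Complex.normSq_add_mul_I] at this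
  have hnorm := congrArg Complex.normSq hprod
  rw [hC₁, hCh₁, hF, hN, hD, hlam₁] at hnorm
  simp only [map_mul, map_div₀, map_pow, Complex.normSq_conj, Complex.normSq_add_mul_I,
    Complex.normSq_ofReal, normSq_exp_real, map_neg] at hnorm
  norm_num at hnorm
  rw [← hAdef, ← hBdef] at hnorm
  have hApos : 0 < A := by
    by_contra hA
    push_neg at hA
    have hdiv : A / B ≤ 0 := div_nonpos_of_nonpos_of_nonneg hA hBpos.le
    have hLpos : 0 < 2*η*(2*η)*Real.exp (2*η*x₁)^2 * (2*η*(2*η)*Real.exp (2*η*xh₁)^2) := by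
      positivity
    rw [hnorm] at hLpos
    have hc : (0:ℝ) ≤ 16*(ξ^2+η^2)^2*((η*η)^2/(ξ*ξ)^2) := by positivity
    nlinarith [mul_nonneg hc (neg_nonneg.mpr hdiv)]
  have hE : Real.exp (2*η*x₁) * Real.exp (2*η*xh₁) = Real.exp (2*η*(x₁+xh₁)) := by
    rw [← Real.exp_add]; ring_nf
  have key : Real.exp (2*η*(x₁+xh₁))^2 = (1+η^2/ξ^2)^2 * (A/B) := by
    rw [← hE, mul_pow]
    field_simp at hnorm ⊢
    have h16 : (16*η^4 : ℝ) ≠ 0 := by positivity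
    apply mul_left_cancel₀ h16
    linear_combination η^4 * hnorm
  have hone : (0:ℝ) < 1 + η^2/ξ^2 := by positivity
  have hABpos : 0 < A / B := div_pos hApos hBpos
  have hlog := congrArg Real.log key
  rw [Real.log_pow, Real.log_exp, Real.log_mul (by positivity) (ne_of_gt hABpos),
    Real.log_pow] at hlog
  push_cast at hlog
  set L1 := Real.log (1 + η ^ 2 / ξ ^ 2)
  set L2 := Real.log (A / B)
  have h4η : (4*η : ℝ) ≠ 0 := by positivity
  rw [show (1:ℝ)/(2*η)*L1 + 1/(4*η)*L2 = (2*L1+L2)/(4*η) by field_simp; ring,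
    eq_div_iff h4η]
  linarith
end

section
/- Let α ∈ ℝ, ξ ≠ 0, η > 0, and set λ₁ = ξ + iη and F = (iα − 2λ₁)/(iα + 2λ₁), assuming iα + 2λ₁ ≠ 0. Let x₁, x̂₁, φ₁, φ̂₁ ∈ ℝ and define C₁ = 2η·e^{2ηx₁ + iφ₁} and Ĉ₁ = 2η·e^{2ηx̂₁ + iφ̂₁}. If C₁ · Ĉ₁* = −4λ₁² · F · η²/ξ², then x₁ + x̂₁ = (1/(2η))·log(1 + η²/ξ²) + (1/(4η))·log( ((2ξ)² + (α − 2η)²) / ((2ξ)² + (α + 2η)²) ). -/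
open Complex Real

/-- Relation between the initial positions of a soliton and its mirror soliton for the
Robin boundary condition `u_x(t,0) = α u(t,0)`. -/
theorem positions_relation_robin_bc (α ξ η : ℝ) (hξ : ξ ≠ 0) (hη : 0 < η)
    (lam₁ : ℂ) (hlam₁ : lam₁ = (ξ : ℂ) + (η : ℂ) * I)
    (hden : I * (α : ℂ) + 2 * lam₁ ≠ 0)
    (F : ℂ)
    (hF : F = (I * (α : ℂ) - 2 * lam₁) / (I * (α : ℂ) + 2 * lam₁))
    (x₁ xh₁ φ₁ φh₁ : ℝ) (C₁ Ch₁ : ℂ)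
    (hC₁ : C₁ = (2 * η : ℝ) * Complex.exp ((2 * η * x₁ : ℝ) + I * (φ₁ : ℂ)))
    (hCh₁ : Ch₁ = (2 * η : ℝ) * Complex.exp ((2 * η * xh₁ : ℝ) + I * (φh₁ : ℂ)))
    (hprod : C₁ * starRingEnd ℂ Ch₁ = -4 * lam₁ ^ 2 * F * ((η : ℂ) ^ 2 / (ξ : ℂ) ^ 2)) :
    x₁ + xh₁ = (1 / (2 * η)) * Real.log (1 + η ^ 2 / ξ ^ 2) +
      (1 / (4 * η)) * Real.log
        (((2 * ξ) ^ 2 + (α - 2 * η) ^ 2) / ((2 * ξ) ^ 2 + (α + 2 * η) ^ 2)) := by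
  have hξ2 : (0:ℝ) < ξ ^ 2 := by positivity
  set r₁ : ℝ := (2 * ξ) ^ 2 + (α - 2 * η) ^ 2 with hr₁
  set r₂ : ℝ := (2 * ξ) ^ 2 + (α + 2 * η) ^ 2 with hr₂
  have hr₁pos : 0 < r₁ := by positivity
  have hr₂pos : 0 < r₂ := by positivity
  have habs : ‖C₁ * starRingEnd ℂ Ch₁‖ = ‖-4 * lam₁ ^ 2 * F * ((η : ℂ) ^ 2 / (ξ : ℂ) ^ 2)‖ := by
    rw [hprod]
  have hL : ‖C₁ * starRingEnd ℂ Ch₁‖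
      = (2 * η) * Real.exp (2 * η * x₁) * ((2 * η) * Real.exp (2 * η * xh₁)) := by
    rw [norm_mul, Complex.norm_conj, hC₁, hCh₁, norm_mul, norm_mul,
      Complex.norm_exp, Complex.norm_exp, Complex.norm_real, Real.norm_eq_abs,
      abs_of_pos (by linarith : (0:ℝ) < 2 * η)]
    norm_num [Complex.add_re, Complex.mul_re]
  have hA1 : ‖I * (α : ℂ) - 2 * lam₁‖ = Real.sqrt r₁ := by
    rw [hlam₁, Complex.norm_def]
    congr 1
    simp [Complex.normSq_apply]
    ring
  have hA2 : ‖I * (α : ℂ) + 2 * lam₁‖ = Real.sqrt r₂ := by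
    rw [hlam₁, Complex.norm_def]
    congr 1
    simp [Complex.normSq_apply]
    ring
  have hAF : ‖F‖ = Real.sqrt r₁ / Real.sqrt r₂ := by
    rw [hF, norm_div, hA1, hA2]
  have hAlam : ‖lam₁‖ ^ 2 = ξ ^ 2 + η ^ 2 := by
    rw [Complex.sq_norm, hlam₁]
    simp [Complex.normSq_apply]
    ring
  have hR : ‖-4 * lam₁ ^ 2 * F * ((η : ℂ) ^ 2 / (ξ : ℂ) ^ 2)‖
      = 4 * (ξ ^ 2 + η ^ 2) * (Real.sqrt r₁ / Real.sqrt r₂) * (η ^ 2 / ξ ^ 2) := by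
    rw [norm_mul, norm_mul, norm_mul, norm_pow, hAF]
    rw [norm_div, norm_pow, norm_pow, Complex.norm_real, Complex.norm_real, Real.norm_eq_abs]
    rw [hAlam]
    norm_num [abs_of_pos hη, _root_.sq_abs]
  rw [hL, hR] at habs
  -- reduce to exponential identity
  have hηne : (2 * η) ≠ 0 := by positivity
  have hexp : Real.exp (2 * η * (x₁ + xh₁))
      = (1 + η ^ 2 / ξ ^ 2) * (Real.sqrt r₁ / Real.sqrt r₂) := by
    rw [mul_add, Real.exp_add]
    have h4 : (0:ℝ) < 4 * η ^ 2 := by positivity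
    have : 4 * η ^ 2 * (Real.exp (2 * η * x₁) * Real.exp (2 * η * xh₁))
        = 4 * η ^ 2 * ((1 + η ^ 2 / ξ ^ 2) * (Real.sqrt r₁ / Real.sqrt r₂)) := by
      calc 4 * η ^ 2 * (Real.exp (2 * η * x₁) * Real.exp (2 * η * xh₁))
          = (2 * η) * Real.exp (2 * η * x₁) * ((2 * η) * Real.exp (2 * η * xh₁)) := by ring
        _ = 4 * (ξ ^ 2 + η ^ 2) * (Real.sqrt r₁ / Real.sqrt r₂) * (η ^ 2 / ξ ^ 2) := habs
        _ = 4 * η ^ 2 * ((ξ ^ 2 + η ^ 2) / ξ ^ 2 * (Real.sqrt r₁ / Real.sqrt r₂)) := by ring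
        _ = 4 * η ^ 2 * ((1 + η ^ 2 / ξ ^ 2) * (Real.sqrt r₁ / Real.sqrt r₂)) := by
            field_simp
    exact mul_left_cancel₀ (ne_of_gt h4) this
  have hlog := congrArg Real.log hexp
  rw [Real.log_exp, Real.log_mul (by positivity) (by positivity),
    Real.log_div (by positivity) (by positivity),
    Real.log_sqrt hr₁pos.le, Real.log_sqrt hr₂pos.le] at hlog
  have hS : x₁ + xh₁ = (2 * η * (x₁ + xh₁)) / (2 * η) := by field_simp
  rw [hS, hlog, Real.log_div hr₁pos.ne' hr₂pos.ne']
  field_simp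
  ring
end
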